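/- Let $l_1, \ldots, l_n$ be a basis of the dual root system $R^\vee$ in $L^*$ and let $-l_{n+1}$ be the highest root of $R^\vee$ with respect to this basis. For $i = 1, \ldots, n+1$ define $Z_i := \bigcap_{j \neq i} \{x \in L \mid l_j(x) \geq 0\}$. Then for every choice of points $x_i \in Z_i$ ($i = 1, \ldots, n+1$), the origin lies in $\operatorname{conv}(\{x_1, \ldots, x_{n+1}\})$. -/

import Mathlib

/-- An irreducible reduced (crystallographic) root system spanning a rational
vector space `L`, encoded via its finite set of roots and the coroot pairing. -/
structure RootSystemData (L : Type*) [AddCommGroup L] [Module ℚ L] where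
  roots : Finset L
  coroot : L → (L →ₗ[ℚ] ℚ)
  ne_zero : ∀ α ∈ roots, α ≠ 0
  span_eq_top : Submodule.span ℚ (roots : Set L) = ⊤
  coroot_self : ∀ α ∈ roots, coroot α α = 2
  coroot_int : ∀ α ∈ roots, ∀ β ∈ roots, ∃ n : ℤ, coroot α β = (n : ℚ)
  reflect_mem : ∀ α ∈ roots, ∀ β ∈ roots, β - coroot α β • α ∈ roots
  reduced : ∀ α ∈ roots, ∀ c : ℚ, c • α ∈ roots → c = 1 ∨ c = -1
  irreducible : ∀ S : Finset L, S ⊆ roots → S.Nonempty →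
    (∃ β ∈ roots, β ∉ S) → ∃ α ∈ S, ∃ β ∈ roots, β ∉ S ∧ coroot α β ≠ 0


/-- The dual root system `R^∨ ⊂ L*`: the set of coroots. -/
def dualRoots {L : Type*} [AddCommGroup L] [Module ℚ L] (R : RootSystemData L) :
    Set (Module.Dual ℚ L) :=
  R.coroot '' (R.roots : Set L)

/-- An indexed family is a base of the dual root system `R^∨`. -/
def IsDualBase {L : Type*} [AddCommGroup L] [Module ℚ L] (R : RootSystemData L)
    {n : ℕ} (b : Fin n → Module.Dual ℚ L) : Prop :=
  (∀ i, b i ∈ dualRoots R) ∧ LinearIndependent ℚ b ∧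
    ∀ φ ∈ dualRoots R,
      (∃ c : Fin n → ℕ, φ = ∑ i, (c i : ℚ) • b i) ∨
      (∃ c : Fin n → ℕ, φ = -(∑ i, (c i : ℚ) • b i))

/-- `θ` is the highest root of `R^∨` with respect to the base `b`: it is a
dual root and dominates every dual root in the usual partial order. -/
def IsHighestDualRoot {L : Type*} [AddCommGroup L] [Module ℚ L]
    (R : RootSystemData L) {n : ℕ} (b : Fin n → Module.Dual ℚ L)
    (θ : Module.Dual ℚ L) : Prop :=
  θ ∈ dualRoots R ∧
    ∀ φ ∈ dualRoots R, ∃ c : Fin n → ℚ, (∀ i, 0 ≤ c i) ∧ θ - φ = ∑ i, c i • b i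

/-- Farkas-type lemma over `ℚ` (purely algebraic): if `z` is not a nonnegative
combination of `v 0, …, v (m-1)`, then some linear functional is nonnegative on
all the `v i` but negative on `z`. -/
lemma farkas_cone {E : Type*} [AddCommGroup E] [Module ℚ E] :
    ∀ (m : ℕ) (v : Fin m → E) (z : E),
      (¬ ∃ lam : Fin m → ℚ, (∀ i, 0 ≤ lam i) ∧ z = ∑ i, lam i • v i) →
      ∃ ψ : Module.Dual ℚ E, (∀ i, 0 ≤ ψ (v i)) ∧ ψ z < 0 := by
  intro m
  induction m with
  | zero =>
      intro v z hz
      have hz0 : z ≠ 0 := by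
        rintro rfl; exact hz ⟨0, fun i => le_rfl, by simp⟩
      have h : ¬ ∀ φ : Module.Dual ℚ E, φ z = 0 := by
        rw [Module.forall_dual_apply_eq_zero_iff ℚ z]; exact hz0
      push_neg at h
      obtain ⟨φ, hφ⟩ := h
      rcases lt_or_gt_of_ne hφ with h | h
      · exact ⟨φ, fun i => i.elim0, h⟩
      · exact ⟨-φ, fun i => i.elim0, by simpa using h⟩
  | succ m ih =>
      intro v z hz
      have hzrest : ¬ ∃ lam : Fin m → ℚ,
          (∀ i, 0 ≤ lam i) ∧ z = ∑ i, lam i • (v ∘ Fin.succ) i := by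
        rintro ⟨lam, h0, hsum⟩
        refine hz ⟨Fin.cons 0 lam, ?_, ?_⟩
        · intro i
          refine Fin.cases ?_ ?_ i <;> simp [h0]
        · rw [Fin.sum_univ_succ]; simpa using hsum
      obtain ⟨ψ, hψ0, hψz⟩ := ih (v ∘ Fin.succ) z hzrest
      by_cases hv0 : 0 ≤ ψ (v 0)
      · refine ⟨ψ, ?_, hψz⟩
        intro i
        refine Fin.cases hv0 (fun j => hψ0 j) i
      · push_neg at hv0
        have ha : ψ (v 0) ≠ 0 := ne_of_lt hv0
        -- eliminate `v 0`
        have hwz : ¬ ∃ lam : Fin m → ℚ, (∀ i, 0 ≤ lam i) ∧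
            (z - (ψ z / ψ (v 0)) • v 0) =
              ∑ i, lam i • ((v ∘ Fin.succ) i - (ψ ((v ∘ Fin.succ) i) / ψ (v 0)) • v 0) := by
          rintro ⟨lam, h0, hsum⟩
          set μ : ℚ := (ψ z - ∑ i, lam i * ψ (v (Fin.succ i))) / ψ (v 0) with hμdef
          have hnum : ψ z - ∑ i, lam i * ψ (v (Fin.succ i)) < 0 := by
            have hs : 0 ≤ ∑ i, lam i * ψ (v (Fin.succ i)) :=
              Finset.sum_nonneg fun i _ => mul_nonneg (h0 i) (hψ0 i)
            linarith
          have hμ : 0 ≤ μ := le_of_lt (div_pos_of_neg_of_neg hnum hv0)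
          refine hz ⟨Fin.cons μ lam, ?_, ?_⟩
          · intro i; refine Fin.cases ?_ ?_ i <;> simp [hμ, h0]
          · rw [Fin.sum_univ_succ]
            simp only [Fin.cons_zero, Fin.cons_succ]
            have hz' : z = (∑ i, lam i • ((v ∘ Fin.succ) i
                - (ψ ((v ∘ Fin.succ) i) / ψ (v 0)) • v 0)) + (ψ z / ψ (v 0)) • v 0 := by
              rw [← hsum]; abel
            rw [hz']
            simp only [Function.comp_apply, smul_sub, smul_smul, Finset.sum_sub_distrib,
              ← Finset.sum_smul]
            rw [hμdef, sub_div, sub_smul, Finset.sum_div]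
            have hsum_eq : (∑ i, lam i * (ψ (v (Fin.succ i)) / ψ (v 0)))
                = ∑ i, lam i * ψ (v (Fin.succ i)) / ψ (v 0) :=
              Finset.sum_congr rfl fun i _ => (mul_div_assoc _ _ _).symm
            rw [hsum_eq]
            abel
        obtain ⟨φ, hφ0, hφz⟩ := ih _ _ hwz
        refine ⟨φ - (φ (v 0) / ψ (v 0)) • ψ, ?_, ?_⟩
        · intro i
          refine Fin.cases ?_ ?_ i
          · simp only [LinearMap.sub_apply, LinearMap.smul_apply, smul_eq_mul]
            rw [div_mul_cancel₀ _ ha]; simp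
          · intro j
            have := hφ0 j
            simp only [Function.comp_apply, map_sub, map_smul, smul_eq_mul] at this
            simp only [LinearMap.sub_apply, LinearMap.smul_apply, smul_eq_mul,
              Function.comp_apply] at this ⊢
            have heq : ψ (v j.succ) / ψ (v 0) * φ (v 0)
                = φ (v 0) / ψ (v 0) * ψ (v j.succ) := by ring
            rw [heq] at this
            linarith
        · have := hφz
          simp only [map_sub, map_smul, smul_eq_mul] at this
          simp only [LinearMap.sub_apply, LinearMap.smul_apply, smul_eq_mul]
          have heq : ψ z / ψ (v 0) * φ (v 0) = φ (v 0) / ψ (v 0) * ψ z := by ring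
          rw [heq] at this
          linarith

/-- If every linear functional is nonnegative at one of the `x i`, then `0`
lies in the convex hull of the `x i`. -/
lemma zero_mem_convexHull_of_dual {E : Type*} [AddCommGroup E] [Module ℚ E] {m : ℕ}
    (x : Fin m → E) (H : ∀ ψ : Module.Dual ℚ E, ∃ i, 0 ≤ ψ (x i)) :
    (0 : E) ∈ convexHull ℚ (Set.range x) := by
  have hex : ∃ lam : Fin m → ℚ, (∀ i, 0 ≤ lam i) ∧
      ((0, 1) : E × ℚ) = ∑ i, lam i • ((x i, 1) : E × ℚ) := by
    by_contra hc
    obtain ⟨Ψ, hΨ0, hΨz⟩ := farkas_cone m _ _ hc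
    obtain ⟨i, hi⟩ := H (-(Ψ.comp (LinearMap.inl ℚ E ℚ)))
    simp only [LinearMap.neg_apply, LinearMap.comp_apply, LinearMap.inl_apply] at hi
    have h1 : Ψ (x i, 1) = Ψ (x i, 0) + Ψ (0, 1) := by
      rw [← map_add]; norm_num
    have h2 := hΨ0 i
    rw [h1] at h2
    linarith
  obtain ⟨lam, h0, hsum⟩ := hex
  have hs1 : ∑ i, lam i = 1 := by
    have := congrArg Prod.snd hsum
    simpa [Prod.snd_sum, smul_eq_mul] using this.symm
  have hs0 : ∑ i, lam i • x i = 0 := by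
    have := congrArg Prod.fst hsum
    simpa [Prod.fst_sum] using this.symm
  have hmem : Finset.univ.centerMass lam x ∈ convexHull ℚ (Set.range x) :=
    Finset.centerMass_mem_convexHull _ (fun i _ => h0 i) (by rw [hs1]; norm_num)
      (fun i _ => Set.mem_range_self i)
  rwa [Finset.centerMass_eq_of_sum_1 _ _ hs1, hs0] at hmem

/-- Let `l 1, …, l n` be a base of the dual root system `R^∨` and let
`-l (n+1)` be the corresponding highest root of `R^∨`.  If, for each `i`, the
point `x i` lies in `Z i = ⋂_{j ≠ i} {x | l j x ≥ 0}`, then `0` lies in the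
convex hull of `x 1, …, x (n+1)`. -/
theorem zero_mem_convexHull_of_mem_sectors {L : Type*} [AddCommGroup L]
    [Module ℚ L] (R : RootSystemData L) {n : ℕ} (hn : Module.finrank ℚ L = n)
    (l : Fin (n + 1) → Module.Dual ℚ L)
    (hbase : IsDualBase R (fun i : Fin n => l i.castSucc))
    (hhigh : IsHighestDualRoot R (fun i : Fin n => l i.castSucc) (-(l (Fin.last n))))
    (x : Fin (n + 1) → L) (hx : ∀ i j, j ≠ i → 0 ≤ l j (x i)) :
    (0 : L) ∈ convexHull ℚ (Set.range x) := by
  classical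
  have hfin : Module.Finite ℚ L :=
    ⟨R.span_eq_top ▸ Submodule.fg_span R.roots.finite_toSet⟩
  rcases Nat.eq_zero_or_pos n with hn0 | hnpos
  · -- trivial case: `L = 0`
    subst hn0
    have : Subsingleton L := Module.finrank_zero_iff.mp hn
    have hx0 : x 0 = 0 := Subsingleton.elim _ _
    exact subset_convexHull ℚ _ (hx0 ▸ Set.mem_range_self 0)
  haveI : Nonempty (Fin n) := ⟨⟨0, hnpos⟩⟩
  have hcard : Fintype.card (Fin n) = Module.finrank ℚ (Module.Dual ℚ L) := by
    rw [Subspace.dual_finrank_eq, hn, Fintype.card_fin]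
  set B := basisOfLinearIndependentOfCardEqFinrank hbase.2.1 hcard with hBdef
  have hB : ⇑B = fun i : Fin n => l i.castSucc :=
    coe_basisOfLinearIndependentOfCardEqFinrank _ _
  set θ : Module.Dual ℚ L := -(l (Fin.last n)) with hθdef
  set c : Fin n → ℚ := fun i => B.repr θ i with hcdef
  have hθsum : ∑ i, c i • B i = θ := B.sum_repr θ
  have hc_pos : ∀ k, 0 < c k := by
    intro k
    obtain ⟨ck, hck0, hckeq⟩ := hhigh.2 (l k.castSucc) (hbase.1 k)
    have hθeq : θ = (∑ i, ck i • B i) + B k := by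
      rw [hB]
      exact sub_eq_iff_eq_add.mp hckeq
    have : c k = ck k + 1 := by
      rw [hcdef]
      simp only [hθeq, map_add, map_sum, map_smul, Module.Basis.repr_self]
      simp [Finsupp.single_apply, Finset.sum_ite_eq']
    rw [this]
    linarith [hck0 k]
  apply zero_mem_convexHull_of_dual
  intro ψ
  set d : Fin n → ℚ := fun i => B.repr ψ i with hddef
  have hψsum : ∑ i, d i • B i = ψ := B.sum_repr ψ
  by_cases hall : ∀ i, 0 ≤ d i
  · refine ⟨Fin.last n, ?_⟩
    rw [← hψsum]
    simp only [LinearMap.sum_apply, LinearMap.smul_apply, smul_eq_mul]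
    refine Finset.sum_nonneg fun i _ => mul_nonneg (hall i) ?_
    rw [hB]
    exact hx _ _ (Fin.castSucc_lt_last i).ne
  · push_neg at hall
    obtain ⟨i0, hi0⟩ := hall
    obtain ⟨k, -, hk⟩ := Finset.exists_min_image Finset.univ (fun i => d i / c i)
      ⟨i0, Finset.mem_univ _⟩
    set t : ℚ := d k / c k with htdef
    have ht_neg : t < 0 := by
      have h1 : t ≤ d i0 / c i0 := hk i0 (Finset.mem_univ _)
      have h2 : d i0 / c i0 < 0 := div_neg_of_neg_of_pos hi0 (hc_pos i0)
      linarith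
    set e : Fin n → ℚ := fun i => d i - t * c i with hedef
    have he : ∀ i, 0 ≤ e i := by
      intro i
      have h1 : t ≤ d i / c i := hk i (Finset.mem_univ _)
      have h2 : t * c i ≤ d i := (le_div_iff₀ (hc_pos i)).mp h1
      simp [hedef]; linarith
    have hek : e k = 0 := by
      have := (hc_pos k).ne'
      simp only [hedef, htdef]; rw [div_mul_cancel₀ _ this, sub_self]
    have hψeq : ψ = (∑ i, e i • B i) + (-t) • l (Fin.last n) := by
      have step : ∑ i, d i • B i = (∑ i, e i • B i) + t • ∑ i, c i • B i := by
        rw [Finset.smul_sum, ← Finset.sum_add_distrib]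
        refine Finset.sum_congr rfl fun i _ => ?_
        rw [smul_smul, ← add_smul]
        congr 1
        simp [hedef]
      rw [← hψsum, step, hθsum, hθdef]
      congr 1
      rw [smul_neg, neg_smul]
    refine ⟨Fin.castSucc k, ?_⟩
    rw [hψeq]
    simp only [LinearMap.add_apply, LinearMap.sum_apply, LinearMap.smul_apply, smul_eq_mul]
    refine add_nonneg (Finset.sum_nonneg fun i _ => ?_)
      (mul_nonneg (by linarith) (hx _ _ (Fin.castSucc_lt_last k).ne'))
    by_cases hik : i = k
    · simp [hik, hek]
    · refine mul_nonneg (he i) ?_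
      rw [hB]
      exact hx _ _ (by simpa [Fin.castSucc_inj] using hik)
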